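/- The measure μ_β(dx) = (1 + sgn(x)β) dx is invariant for the skew Brownian motion transition kernel: for every nonnegative measurable f: ℝ → ℝ and every t > 0, ∫_ℝ (∫_ℝ p_β(t,x,y) f(y) dy) μ_β(dx) = ∫_ℝ f(y) μ_β(dy), where p_β(t,x,y) = (1/√(2πt))e^{-(x-y)²/(2t)} + β·sgn(y)·(1/√(2πt))e^{-(|x|+|y|)²/(2t)}. -/

import Mathlib

open MeasureTheory Set

/-- Transition density of the skew Brownian motion with parameter `β`. -/
noncomputable def skewDensity (β t x y : ℝ) : ℝ :=
  (1 / Real.sqrt (2 * Real.pi * t)) * Real.exp (-(x - y) ^ 2 / (2 * t))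
    + β * Real.sign y * ((1 / Real.sqrt (2 * Real.pi * t)) * Real.exp (-(|x| + |y|) ^ 2 / (2 * t)))

namespace SkewAux

open ProbabilityTheory Real

/-- The centered Gaussian kernel with variance `t`. -/
noncomputable def gK (t u : ℝ) : ℝ :=
  (1 / Real.sqrt (2 * Real.pi * t)) * Real.exp (-u ^ 2 / (2 * t))

lemma gK_nonneg (t u : ℝ) : 0 ≤ gK t u := by
  unfold gK; positivity

lemma gK_eq_gaussian {t : ℝ} (ht : 0 < t) :
    gK t = gaussianPDFReal 0 t.toNNReal := by
  funext u
  simp [gK, gaussianPDFReal, Real.coe_toNNReal _ ht.le, one_div]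

lemma integrable_gK {t : ℝ} (ht : 0 < t) : Integrable (gK t) := by
  rw [gK_eq_gaussian ht]; exact integrable_gaussianPDFReal 0 _

lemma integral_gK {t : ℝ} (ht : 0 < t) : ∫ u, gK t u = 1 := by
  rw [gK_eq_gaussian ht]
  exact integral_gaussianPDFReal_eq_one 0 (Real.toNNReal_pos.mpr ht).ne'

lemma continuous_gK (t : ℝ) : Continuous (gK t) := by
  unfold gK; fun_prop

lemma gK_neg (t u : ℝ) : gK t (-u) = gK t u := by
  simp [gK, neg_pow]

lemma gK_le {t a b : ℝ} (ht : 0 < t) (h : |a| ≤ |b|) : gK t b ≤ gK t a := by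
  unfold gK
  have h2 : a ^ 2 ≤ b ^ 2 := by
    rw [← sq_abs a, ← sq_abs b]
    exact pow_le_pow_left₀ (abs_nonneg a) h 2
  have h3 : -b ^ 2 / (2 * t) ≤ -a ^ 2 / (2 * t) := by
    apply div_le_div_of_nonneg_right ?_ ?_ |>.trans_eq rfl
    · linarith
    · linarith
  have := Real.exp_le_exp.mpr h3
  have hpos : (0:ℝ) ≤ 1 / Real.sqrt (2 * Real.pi * t) := by positivity
  exact mul_le_mul_of_nonneg_left this hpos

/-- Tail integral of the Gaussian kernel. -/
noncomputable def tailInt (t a : ℝ) : ℝ := ∫ u in Ioi a, gK t u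

lemma setIntegral_comp_add_Ioi (f : ℝ → ℝ) (a c : ℝ) :
    ∫ x in Ioi a, f (x + c) = ∫ x in Ioi (a + c), f x := by
  have h := (measurePreserving_add_right volume c).setIntegral_preimage_emb
    (measurableEmbedding_addRight c) f (Ioi (a + c))
  rw [← h]
  congr 1
  ext x
  simp

lemma setIntegral_comp_add_Iio (f : ℝ → ℝ) (a c : ℝ) :
    ∫ x in Iio a, f (x + c) = ∫ x in Iio (a + c), f x := by
  have h := (measurePreserving_add_right volume c).setIntegral_preimage_emb
    (measurableEmbedding_addRight c) f (Iio (a + c))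
  rw [← h]
  congr 1
  ext x
  simp

lemma setIntegral_comp_sub_left_Iio (f : ℝ → ℝ) (a c : ℝ) :
    ∫ x in Iio a, f (c - x) = ∫ x in Ioi (c - a), f x := by
  have h := (Measure.measurePreserving_sub_left volume c).setIntegral_preimage_emb
    ((MeasurableEquiv.subLeft c).measurableEmbedding) f (Ioi (c - a))
  rw [← h]
  congr 1
  ext x
  simp [sub_lt_sub_iff_left]

lemma iio_eq_tail {t : ℝ} (a : ℝ) : ∫ x in Iio a, gK t x = tailInt t (-a) := by
  have h1 : ∫ x in Iio a, gK t x = ∫ x in Iio a, gK t (0 - x) := by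
    apply setIntegral_congr_fun measurableSet_Iio
    intro x _
    show gK t x = gK t (0 - x)
    rw [zero_sub, gK_neg]
  rw [h1, setIntegral_comp_sub_left_Iio, zero_sub]
  rfl

lemma tail_total {t : ℝ} (ht : 0 < t) (a : ℝ) : tailInt t (-a) + tailInt t a = 1 := by
  have h := intervalIntegral.integral_Iic_add_Ioi (b := a) (f := gK t) (μ := volume)
    ((integrable_gK ht).integrableOn) ((integrable_gK ht).integrableOn)
  rw [integral_gK ht] at h
  have h2 : ∫ x in Iic a, gK t x = tailInt t (-a) := by
    rw [← setIntegral_congr_set (Iio_ae_eq_Iic (a := a))]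
    exact iio_eq_tail a
  rw [← h, h2]
  rfl

lemma sign_abs_le (x : ℝ) : |Real.sign x| ≤ 1 := by
  rcases lt_trichotomy x 0 with h | h | h
  · rw [Real.sign_of_neg h]; simp
  · rw [h, Real.sign_zero]; simp
  · rw [Real.sign_of_pos h]; simp

lemma weight_nonneg {β : ℝ} (hβ : |β| ≤ 1) (x : ℝ) : 0 ≤ 1 + Real.sign x * β := by
  have h1 : |Real.sign x * β| ≤ 1 := by
    rw [abs_mul]
    exact mul_le_one₀ (sign_abs_le x) (abs_nonneg β) hβ
  have := abs_le.mp h1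
  linarith [this.1]

lemma weight_le_two {β : ℝ} (hβ : |β| ≤ 1) (x : ℝ) : 1 + Real.sign x * β ≤ 2 := by
  have h1 : |Real.sign x * β| ≤ 1 := by
    rw [abs_mul]
    exact mul_le_one₀ (sign_abs_le x) (abs_nonneg β) hβ
  have := abs_le.mp h1
  linarith [this.2]

lemma measurable_sign : Measurable Real.sign := by
  have : Real.sign = fun x : ℝ => if x < 0 then (-1 : ℝ) else if 0 < x then 1 else 0 := by
    funext x; rfl
  rw [this]
  apply Measurable.ite
  · exact measurableSet_lt measurable_id measurable_const
  · exact measurable_const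
  · apply Measurable.ite
    · exact measurableSet_lt measurable_const measurable_id
    · exact measurable_const
    · exact measurable_const

lemma skewDensity_eq (β t x y : ℝ) :
    skewDensity β t x y = gK t (x - y) + β * Real.sign y * gK t (|x| + |y|) := rfl

lemma abs_sub_le_abs_add_abs (x y : ℝ) : |x - y| ≤ |x| + |y| := by
  calc |x - y| = |x + -y| := by ring_nf
    _ ≤ |x| + |-y| := abs_add_le x (-y)
    _ = |x| + |y| := by rw [abs_neg]

lemma gK_second_le {t x y : ℝ} (ht : 0 < t) : gK t (|x| + |y|) ≤ gK t (x - y) := by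
  apply gK_le ht
  rw [abs_of_nonneg (by positivity : (0:ℝ) ≤ |x| + |y|)]
  exact abs_sub_le_abs_add_abs x y

lemma skewDensity_nonneg {β t : ℝ} (hβ : |β| ≤ 1) (ht : 0 < t) (x y : ℝ) :
    0 ≤ skewDensity β t x y := by
  rw [skewDensity_eq]
  have h1 : |β * Real.sign y| ≤ 1 := by
    rw [abs_mul]
    exact mul_le_one₀ hβ (abs_nonneg _) (sign_abs_le y)
  have h2 := gK_second_le (x := x) (y := y) ht
  have h3 := gK_nonneg t (|x| + |y|)
  have h4 := (abs_le.mp h1).1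
  nlinarith [mul_le_mul_of_nonneg_right h4 h3]

lemma skewDensity_le {β t : ℝ} (hβ : |β| ≤ 1) (ht : 0 < t) (x y : ℝ) :
    skewDensity β t x y ≤ 2 * gK t (x - y) := by
  rw [skewDensity_eq]
  have h1 : |β * Real.sign y| ≤ 1 := by
    rw [abs_mul]
    exact mul_le_one₀ hβ (abs_nonneg _) (sign_abs_le y)
  have h2 := gK_second_le (x := x) (y := y) ht
  have h3 := gK_nonneg t (|x| + |y|)
  have h4 := (abs_le.mp h1).2
  nlinarith [mul_le_mul_of_nonneg_right h4 h3]

lemma measurable_skew_x (β t y : ℝ) :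
    Measurable fun x => skewDensity β t x y * (1 + Real.sign x * β) := by
  apply Measurable.mul
  · have : Continuous fun x => skewDensity β t x y := by
      unfold skewDensity; fun_prop
    exact this.measurable
  · exact (measurable_const.add (measurable_sign.mul measurable_const))

lemma integrable_skew (β t y : ℝ) (hβ : |β| ≤ 1) (ht : 0 < t) :
    Integrable (fun x => skewDensity β t x y * (1 + Real.sign x * β)) := by
  apply Integrable.mono' (g := fun x => gK t (x - y) * 4)
  · exact ((integrable_gK ht).comp_sub_right y).mul_const 4
  · exact (measurable_skew_x β t y).aestronglyMeasurable
  · filter_upwards with x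
    have hp := skewDensity_nonneg hβ ht x y
    have hw := weight_nonneg hβ x
    have hp2 := skewDensity_le hβ ht x y
    have hw2 := weight_le_two hβ x
    have hg := gK_nonneg t (x - y)
    rw [Real.norm_eq_abs, abs_of_nonneg (mul_nonneg hp hw)]
    nlinarith

lemma integral_skew (β t y : ℝ) (hβ : |β| ≤ 1) (ht : 0 < t) :
    ∫ x, skewDensity β t x y * (1 + Real.sign x * β) = 1 + Real.sign y * β := by
  set s := Real.sign y with hs
  have hg := integrable_gK ht
  have hg1 : Integrable fun x => gK t (x + -y) := by
    simpa [sub_eq_add_neg] using hg.comp_sub_right y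
  have hg2 : Integrable fun x => gK t (x + |y|) := by
    simpa [sub_eq_add_neg] using hg.comp_sub_right (-|y|)
  have hg3 : Integrable fun x => gK t (|y| - x) := hg.comp_sub_left |y|
  -- split the integral at 0
  have hint := integrable_skew β t y hβ ht
  have hsplit := intervalIntegral.integral_Iic_add_Ioi (b := 0)
    (f := fun x => skewDensity β t x y * (1 + Real.sign x * β)) (μ := volume)
    hint.integrableOn hint.integrableOn
  rw [← hsplit]
  -- Ioi part
  have hIoi : ∫ x in Ioi 0, skewDensity β t x y * (1 + Real.sign x * β)
      = (tailInt t (-y) + β * s * tailInt t |y|) * (1 + β) := by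
    rw [setIntegral_congr_fun measurableSet_Ioi
      (g := fun x => (gK t (x + -y) + β * s * gK t (x + |y|)) * (1 + β))]
    · rw [MeasureTheory.integral_mul_const]
      congr 1
      rw [integral_add hg1.integrableOn ((hg2.const_mul (β * s)).integrableOn)]
      rw [MeasureTheory.integral_const_mul]
      rw [setIntegral_comp_add_Ioi (gK t) 0 (-y), setIntegral_comp_add_Ioi (gK t) 0 |y|,
        zero_add, zero_add]
      rfl
    · intro x hx
      show skewDensity β t x y * (1 + Real.sign x * β) = (gK t (x + -y) + β * s * gK t (x + |y|)) * (1 + β)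
      rw [skewDensity_eq, Real.sign_of_pos hx, abs_of_pos hx, ← hs]
      ring_nf
  -- Iio part
  have hIio : ∫ x in Iio 0, skewDensity β t x y * (1 + Real.sign x * β)
      = (tailInt t y + β * s * tailInt t |y|) * (1 - β) := by
    rw [setIntegral_congr_fun measurableSet_Iio
      (g := fun x => (gK t (x + -y) + β * s * gK t (|y| - x)) * (1 - β))]
    · rw [MeasureTheory.integral_mul_const]
      congr 1
      rw [integral_add hg1.integrableOn ((hg3.const_mul (β * s)).integrableOn)]
      rw [MeasureTheory.integral_const_mul]
      rw [setIntegral_comp_add_Iio (gK t) 0 (-y), zero_add]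
      rw [setIntegral_comp_sub_left_Iio (gK t) 0 |y|, sub_zero]
      rw [iio_eq_tail, neg_neg]
      rfl
    · intro x hx
      show skewDensity β t x y * (1 + Real.sign x * β) = (gK t (x + -y) + β * s * gK t (|y| - x)) * (1 - β)
      rw [skewDensity_eq, Real.sign_of_neg hx, abs_of_neg hx, ← hs]
      ring_nf
  have hIic : ∫ x in Iic 0, skewDensity β t x y * (1 + Real.sign x * β)
      = (tailInt t y + β * s * tailInt t |y|) * (1 - β) := by
    rw [← setIntegral_congr_set (Iio_ae_eq_Iic (a := (0:ℝ)))]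
    exact hIio
  rw [hIic, hIoi]
  set P := tailInt t (-y) with hP
  set Q := tailInt t y with hQ
  set T := tailInt t |y| with hT
  have hPQ : P + Q = 1 := tail_total ht y
  have hkey : P - Q + 2 * s * T = s := by
    rcases lt_trichotomy y 0 with h | h | h
    · have hs1 : s = -1 := by rw [hs, Real.sign_of_neg h]
      have hTy : T = P := by rw [hT, hP, abs_of_neg h]
      rw [hs1, hTy]; linarith
    · have hs1 : s = 0 := by rw [hs, h, Real.sign_zero]
      have hTy : P = Q := by rw [hP, hQ, h, neg_zero]
      rw [hs1, hTy]; ring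
    · have hs1 : s = 1 := by rw [hs, Real.sign_of_pos h]
      have hTy : T = Q := by rw [hT, hQ, abs_of_pos h]
      rw [hs1, hTy]; linarith
  linear_combination hPQ + β * hkey

lemma key_lintegral (β t y : ℝ) (hβ : |β| ≤ 1) (ht : 0 < t) :
    ∫⁻ x, ENNReal.ofReal (skewDensity β t x y * (1 + Real.sign x * β))
      = ENNReal.ofReal (1 + Real.sign y * β) := by
  rw [← ofReal_integral_eq_lintegral_ofReal (integrable_skew β t y hβ ht)
    (Filter.Eventually.of_forall fun x =>
      mul_nonneg (skewDensity_nonneg hβ ht x y) (weight_nonneg hβ x))]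
  rw [integral_skew β t y hβ ht]

lemma measurable_skew_pair (β t : ℝ) :
    Measurable fun z : ℝ × ℝ => skewDensity β t z.1 z.2 := by
  unfold skewDensity
  apply Measurable.add
  · have : Continuous fun z : ℝ × ℝ =>
        (1 / Real.sqrt (2 * Real.pi * t)) * Real.exp (-(z.1 - z.2) ^ 2 / (2 * t)) := by
      fun_prop
    exact this.measurable
  · apply Measurable.mul
    · exact measurable_const.mul (measurable_sign.comp measurable_snd)
    · have : Continuous fun z : ℝ × ℝ =>
          (1 / Real.sqrt (2 * Real.pi * t)) * Real.exp (-(|z.1| + |z.2|) ^ 2 / (2 * t)) := by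
        fun_prop
      exact this.measurable

end SkewAux

open SkewAux in
/-- The measure `μ_β(dx) = (1 + sgn(x)β) dx` is invariant for the skew Brownian motion kernel:
for every nonnegative measurable `f` and `t > 0`,
`∫ (∫ p_β(t,x,y) f(y) dy) μ_β(dx) = ∫ f dμ_β`. -/
theorem skewDensity_invariant_measure (β : ℝ) (hβ : β ∈ Set.Icc (-1 : ℝ) 1)
    (f : ℝ → ℝ) (hf : Measurable f) (hf_nonneg : ∀ y, 0 ≤ f y) (t : ℝ) (ht : 0 < t) :
    (∫⁻ x : ℝ, (∫⁻ y : ℝ, ENNReal.ofReal (skewDensity β t x y * f y))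
        * ENNReal.ofReal (1 + Real.sign x * β))
      = ∫⁻ y : ℝ, ENNReal.ofReal (f y * (1 + Real.sign y * β)) := by
  have hβ' : |β| ≤ 1 := abs_le.mpr ⟨hβ.1, hβ.2⟩
  have step1 : ∀ x : ℝ,
      (∫⁻ y : ℝ, ENNReal.ofReal (skewDensity β t x y * f y))
          * ENNReal.ofReal (1 + Real.sign x * β)
        = ∫⁻ y : ℝ, ENNReal.ofReal (f y)
            * ENNReal.ofReal (skewDensity β t x y * (1 + Real.sign x * β)) := by
    intro x
    rw [← lintegral_mul_const' _ _ ENNReal.ofReal_ne_top]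
    congr 1
    funext y
    calc ENNReal.ofReal (skewDensity β t x y * f y) * ENNReal.ofReal (1 + Real.sign x * β)
        = ENNReal.ofReal (skewDensity β t x y * f y * (1 + Real.sign x * β)) :=
          (ENNReal.ofReal_mul (mul_nonneg (skewDensity_nonneg hβ' ht x y) (hf_nonneg y))).symm
      _ = ENNReal.ofReal (f y * (skewDensity β t x y * (1 + Real.sign x * β))) := by
          congr 1; ring
      _ = ENNReal.ofReal (f y)
            * ENNReal.ofReal (skewDensity β t x y * (1 + Real.sign x * β)) :=
          ENNReal.ofReal_mul (hf_nonneg y)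
  simp only [step1]
  have hmeas : AEMeasurable (fun z : ℝ × ℝ => ENNReal.ofReal (f z.2)
      * ENNReal.ofReal (skewDensity β t z.1 z.2 * (1 + Real.sign z.1 * β)))
      (volume.prod volume) := by
    apply Measurable.aemeasurable
    refine Measurable.mul (f := fun z : ℝ × ℝ => ENNReal.ofReal (f z.2))
      (g := fun z : ℝ × ℝ => ENNReal.ofReal (skewDensity β t z.1 z.2 * (1 + Real.sign z.1 * β))) ?_ ?_
    · exact ENNReal.measurable_ofReal.comp (hf.comp measurable_snd)
    · apply ENNReal.measurable_ofReal.comp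
      exact (measurable_skew_pair β t).mul
        (measurable_const.add ((measurable_sign.comp measurable_fst).mul measurable_const))
  rw [lintegral_lintegral_swap hmeas]
  congr 1
  funext y
  rw [lintegral_const_mul' _ _ ENNReal.ofReal_ne_top]
  rw [key_lintegral β t y hβ' ht]
  exact (ENNReal.ofReal_mul (hf_nonneg y)).symm
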